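/- arXiv:1709.06665 — 2 statements merged into one kernel-verified Lean document; each statement's English description precedes it below -/
import Mathlib

section
/- Let u: R^n → R be a convex differentiable function satisfying α|x| ≤ u(x) ≤ α|x| + κ for all x ∈ R^n, where α > 0, κ > 0. Then |Du(x)| ≤ α for all x ∈ R^n. -/
/-- A convex differentiable function `u : ℝⁿ → ℝ` satisfying `α|x| ≤ u(x) ≤ α|x| + κ`
with `α > 0`, `κ > 0` has gradient bounded by `α`: `|Du(x)| ≤ α` for all `x`. -/
theorem stmt_5 (n : ℕ) (u : EuclideanSpace ℝ (Fin n) → ℝ)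
    (hconv : ConvexOn ℝ Set.univ u) (hdiff : Differentiable ℝ u)
    (α κ : ℝ) (hα : 0 < α) (hκ : 0 < κ)
    (hbound : ∀ x, α * ‖x‖ ≤ u x ∧ u x ≤ α * ‖x‖ + κ) :
    ∀ x, ‖fderiv ℝ u x‖ ≤ α := by
  intro x
  -- Key: for every direction v, (fderiv ℝ u x) v ≤ α * ‖v‖.
  have key : ∀ v : EuclideanSpace ℝ (Fin n), (fderiv ℝ u x) v ≤ α * ‖v‖ := by
    intro v
    -- the 1D restriction g t = u (x + t • v)
    set g : ℝ → ℝ := fun t => u (x + t • v) with hg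
    have hgconv : ConvexOn ℝ Set.univ g := by
      have := hconv.comp_affineMap (AffineMap.lineMap x (x + v))
      have heq : g = u ∘ (AffineMap.lineMap x (x + v)) := by
        funext t
        simp [hg, AffineMap.lineMap_apply, add_comm]
      rw [heq]
      simpa using this
    have hgderiv : HasDerivAt g ((fderiv ℝ u x) v) 0 := by
      have h1 : HasDerivAt (fun t : ℝ => x + t • v) v 0 := by
        have := ((hasDerivAt_id (0 : ℝ)).smul_const v).const_add x
        simpa using this
      have h2 : HasFDerivAt u (fderiv ℝ u x) ((fun t : ℝ => x + t • v) 0) := by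
        simpa using (hdiff x).hasFDerivAt
      exact h2.comp_hasDerivAt 0 h1
    -- slope bound for all t > 0
    have hslope : ∀ t : ℝ, 0 < t → (fderiv ℝ u x) v ≤ α * ‖v‖ + κ / t := by
      intro t ht
      have h1 : (fderiv ℝ u x) v ≤ slope g 0 t :=
        hgconv.le_slope_of_hasDerivAt (Set.mem_univ 0) (Set.mem_univ t) ht hgderiv
      have h2 : slope g 0 t = (g t - g 0) / t := by
        rw [slope_def_field]; ring_nf
      have hgt : g t ≤ α * ‖x‖ + α * (t * ‖v‖) + κ := by
        have := (hbound (x + t • v)).2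
        calc g t ≤ α * ‖x + t • v‖ + κ := this
          _ ≤ α * (‖x‖ + ‖t • v‖) + κ := by
              gcongr; exact norm_add_le _ _
          _ = α * ‖x‖ + α * (t * ‖v‖) + κ := by
              rw [norm_smul, Real.norm_eq_abs, abs_of_pos ht]; ring
      have hg0 : α * ‖x‖ ≤ g 0 := by
        have := (hbound x).1
        simpa [hg] using this
      calc (fderiv ℝ u x) v ≤ (g t - g 0) / t := by rw [← h2]; exact h1
        _ ≤ (α * (t * ‖v‖) + κ) / t := by
            gcongr
            linarith
        _ = α * ‖v‖ + κ / t := by field_simp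
    -- let t → ∞
    refine le_of_forall_pos_le_add fun ε hε => ?_
    have ht : (0:ℝ) < κ / ε := div_pos hκ hε
    have := hslope (κ / ε) ht
    have : κ / (κ / ε) = ε := by field_simp
    calc (fderiv ℝ u x) v ≤ α * ‖v‖ + κ / (κ / ε) := hslope _ ht
      _ = α * ‖v‖ + ε := by rw [this]
  refine ContinuousLinearMap.opNorm_le_bound _ hα.le fun v => ?_
  rw [Real.norm_eq_abs, abs_le]
  constructor
  · have := key (-v)
    simp only [map_neg, norm_neg] at this
    linarith
  · exact key v
end

section
/- Let n ≥ 2, α₀ > 0. Suppose u: R^n → R is a convex differentiable function with α|x| ≤ u(x) ≤ α|x| + κ for some 0 < α ≤ α₀ and κ > 0. Let F(x) = (x, u(x)) ∈ R^{n+1}, ω = e_{n+1}, ν(x) = (Du(x), −1)/√(1+|Du(x)|²). Then the quantity ⟨F̂, ν⟩ := −⟨F,ω⟩⟨ω,ν⟩ = u(x)/√(1+|Du(x)|²) satisfies ⟨F̂, ν⟩ ≥ (α/(1+α²)) |F(x)| for all x ∈ R^n; consequently ⟨F̂, ν⟩ ≥ λ(n,α₀) √γ |F| where γ = (n−1)α²/(1+α²)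 and λ(n,α₀) = 1/(√(n−1)·√(1+α₀²)). -/
/-- Gradient bound for a convex function below a cone. -/
lemma grad_bound {n : ℕ} (u : EuclideanSpace ℝ (Fin n) → ℝ)
    (hconv : ConvexOn ℝ Set.univ u) (hdiff : Differentiable ℝ u)
    (α κ : ℝ) (hα : 0 < α) (hκ : 0 < κ)
    (hlo : ∀ x, α * ‖x‖ ≤ u x) (hhi : ∀ x, u x ≤ α * ‖x‖ + κ) (x : EuclideanSpace ℝ (Fin n)) :
    ‖fderiv ℝ u x‖ ≤ α := by
  have key : ∀ v : EuclideanSpace ℝ (Fin n), fderiv ℝ u x v ≤ α * ‖v‖ := by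
    intro v
    refine le_of_forall_pos_le_add (fun ε hε => ?_)
    set t : ℝ := κ / ε with ht
    have ht0 : 0 < t := div_pos hκ hε
    -- g s = u (x + s • v)
    set g : ℝ → ℝ := fun s => u (x + s • v) with hg
    have hgconv : ConvexOn ℝ Set.univ g := by
      have h := hconv.comp_affineMap (AffineMap.lineMap x (x + v) : ℝ →ᵃ[ℝ] _)
      have he : g = u ∘ (AffineMap.lineMap x (x + v) : ℝ →ᵃ[ℝ] _) := by
        funext s
        simp [hg, AffineMap.lineMap_apply, add_comm]
      rw [he]
      simpa using h
    have hc : HasDerivAt (fun s : ℝ => x + s • v) v 0 := by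
      simpa using ((hasDerivAt_id (0:ℝ)).smul_const v).const_add x
    have hgd : HasDerivAt g (fderiv ℝ u x v) 0 := by
      have := ((hdiff (x + (0:ℝ) • v)).hasFDerivAt.comp_hasDerivAt 0 hc)
      simp only [zero_smul, add_zero] at this
      exact this
    have hslope := hgconv.le_slope_of_hasDerivAt (Set.mem_univ 0) (Set.mem_univ t) ht0 hgd
    rw [slope_def_field] at hslope
    have h1 : g t ≤ α * ‖x‖ + α * t * ‖v‖ + κ := by
      have := hhi (x + t • v)
      have hn : ‖x + t • v‖ ≤ ‖x‖ + t * ‖v‖ := by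
        calc ‖x + t • v‖ ≤ ‖x‖ + ‖t • v‖ := norm_add_le _ _
        _ = ‖x‖ + t * ‖v‖ := by rw [norm_smul, Real.norm_eq_abs, abs_of_pos ht0]
      nlinarith
    have h2 : α * ‖x‖ ≤ g 0 := by simpa [hg] using hlo x
    refine hslope.trans ?_
    rw [sub_zero, div_le_iff₀ ht0]
    have hgt : g t - g 0 ≤ α * t * ‖v‖ + κ := by nlinarith
    have hκt : κ = ε * t := by rw [ht]; field_simp
    nlinarith
  refine ContinuousLinearMap.opNorm_le_bound _ hα.le (fun v => ?_)
  rw [Real.norm_eq_abs, abs_le]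
  constructor
  · have := key (-v)
    simp only [map_neg, norm_neg] at this
    linarith
  · exact key v

/-- For an entire convex graph `x_{n+1} = u(x)` pinched between the cones `α|x|` and
`α|x| + κ` with `0 < α ≤ α₀`, the quantity
`⟨F̂,ν⟩ = −⟨F,ω⟩⟨ω,ν⟩ = u(x)/√(1+|Du(x)|²)` satisfies
`⟨F̂,ν⟩ ≥ (α/(1+α²))|F(x)|`, and consequently `⟨F̂,ν⟩ ≥ λ(n,α₀)√γ |F|` with
`γ = (n−1)α²/(1+α²)` and `λ(n,α₀) = 1/(√(n−1)√(1+α₀²))`, where `|F(x)|² = |x|² + u(x)²`. -/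
theorem stmt_6 (n : ℕ) (hn : 2 ≤ n) (α₀ : ℝ) (hα₀ : 0 < α₀)
    (u : EuclideanSpace ℝ (Fin n) → ℝ)
    (hconv : ConvexOn ℝ Set.univ u) (hdiff : Differentiable ℝ u)
    (α κ : ℝ) (hα : 0 < α) (hαα₀ : α ≤ α₀) (hκ : 0 < κ)
    (hbound : ∀ x, α * ‖x‖ ≤ u x ∧ u x ≤ α * ‖x‖ + κ) :
    ∀ x,
      α / (1 + α ^ 2) * Real.sqrt (‖x‖ ^ 2 + u x ^ 2) ≤
          u x / Real.sqrt (1 + ‖fderiv ℝ u x‖ ^ 2) ∧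
      1 / (Real.sqrt (n - 1) * Real.sqrt (1 + α₀ ^ 2)) *
            Real.sqrt ((n - 1) * α ^ 2 / (1 + α ^ 2)) *
            Real.sqrt (‖x‖ ^ 2 + u x ^ 2) ≤
          u x / Real.sqrt (1 + ‖fderiv ℝ u x‖ ^ 2) := by
  intro x
  have hD : ‖fderiv ℝ u x‖ ≤ α :=
    grad_bound u hconv hdiff α κ hα hκ (fun y => (hbound y).1) (fun y => (hbound y).2) x
  have hD0 : (0:ℝ) ≤ ‖fderiv ℝ u x‖ := norm_nonneg _
  have hu0 : 0 ≤ u x := le_trans (by positivity) (hbound x).1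
  have hux : ‖x‖ ≤ u x / α := (le_div_iff₀ hα).2 (by linarith [(hbound x).1, mul_comm α ‖x‖])
  set D := ‖fderiv ℝ u x‖ with hDdef
  have hSα : Real.sqrt (1 + D ^ 2) ≤ Real.sqrt (1 + α ^ 2) :=
    Real.sqrt_le_sqrt (by nlinarith)
  have hS1 : (1:ℝ) ≤ Real.sqrt (1 + D ^ 2) := by
    have := Real.sqrt_le_sqrt (show (1:ℝ) ≤ 1 + D ^ 2 by nlinarith)
    simpa using this
  have hSpos : 0 < Real.sqrt (1 + D ^ 2) := lt_of_lt_of_le one_pos hS1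
  have hsqα : Real.sqrt (1 + α ^ 2) ^ 2 = 1 + α ^ 2 := Real.sq_sqrt (by positivity)
  have hsqαpos : 0 < Real.sqrt (1 + α ^ 2) := Real.sqrt_pos.2 (by positivity)
  -- first inequality
  have h1 : Real.sqrt (‖x‖ ^ 2 + u x ^ 2) ≤ u x * Real.sqrt (1 + α ^ 2) / α := by
    rw [show u x * Real.sqrt (1 + α ^ 2) / α = Real.sqrt ((u x * Real.sqrt (1 + α ^ 2) / α)^2) by
      rw [Real.sqrt_sq (by positivity)]]
    apply Real.sqrt_le_sqrt
    have : ‖x‖ ^ 2 ≤ (u x / α) ^ 2 := by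
      apply pow_le_pow_left₀ (norm_nonneg _) hux
    have hexp : (u x * Real.sqrt (1 + α ^ 2) / α)^2 = u x ^2 * (1 + α^2) / α^2 := by
      field_simp; nlinarith [hsqα]
    rw [hexp]
    rw [div_pow] at this
    have hα2 : (0:ℝ) < α ^ 2 := by positivity
    rw [le_div_iff₀ hα2] at this ⊢
    nlinarith
  have main : α / (1 + α ^ 2) * Real.sqrt (‖x‖ ^ 2 + u x ^ 2) ≤
      u x / Real.sqrt (1 + D ^ 2) := by
    have step1 : α / (1 + α ^ 2) * Real.sqrt (‖x‖ ^ 2 + u x ^ 2) ≤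
        α / (1 + α ^ 2) * (u x * Real.sqrt (1 + α ^ 2) / α) := by
      apply mul_le_mul_of_nonneg_left h1 (by positivity)
    have hss : Real.sqrt (1 + α ^ 2) * Real.sqrt (1 + α ^ 2) = 1 + α ^ 2 :=
      Real.mul_self_sqrt (by positivity)
    have step2 : α / (1 + α ^ 2) * (u x * Real.sqrt (1 + α ^ 2) / α) =
        u x / Real.sqrt (1 + α ^ 2) := by
      field_simp
      linear_combination u x * hss
    have step3 : u x / Real.sqrt (1 + α ^ 2) ≤ u x / Real.sqrt (1 + D ^ 2) :=
      div_le_div_of_nonneg_left hu0 hSpos hSα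
    calc α / (1 + α ^ 2) * Real.sqrt (‖x‖ ^ 2 + u x ^ 2)
        ≤ α / (1 + α ^ 2) * (u x * Real.sqrt (1 + α ^ 2) / α) := step1
      _ = u x / Real.sqrt (1 + α ^ 2) := step2
      _ ≤ u x / Real.sqrt (1 + D ^ 2) := step3
  refine ⟨main, ?_⟩
  -- second: the coefficient is smaller
  have hn1 : (1:ℝ) ≤ (n:ℝ) - 1 := by
    have : (2:ℝ) ≤ (n:ℝ) := by exact_mod_cast hn
    linarith
  have hcoef : 1 / (Real.sqrt (n - 1) * Real.sqrt (1 + α₀ ^ 2)) *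
      Real.sqrt ((n - 1) * α ^ 2 / (1 + α ^ 2)) ≤ α / (1 + α ^ 2) := by
    have hγ : Real.sqrt ((n - 1) * α ^ 2 / (1 + α ^ 2)) =
        Real.sqrt ((n:ℝ) - 1) * α / Real.sqrt (1 + α ^ 2) := by
      rw [Real.sqrt_div (by nlinarith : (0:ℝ) ≤ ((n:ℝ) - 1) * α ^ 2),
        Real.sqrt_mul (by linarith : (0:ℝ) ≤ (n:ℝ) - 1), Real.sqrt_sq hα.le]
    rw [hγ]
    have hsqn : 0 < Real.sqrt ((n:ℝ) - 1) := Real.sqrt_pos.2 (by linarith)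
    have hsqα₀ : Real.sqrt (1 + α ^ 2) ≤ Real.sqrt (1 + α₀ ^ 2) :=
      Real.sqrt_le_sqrt (by nlinarith)
    have hsqα₀pos : 0 < Real.sqrt (1 + α₀ ^ 2) := Real.sqrt_pos.2 (by positivity)
    have hss : Real.sqrt (1 + α ^ 2) * Real.sqrt (1 + α ^ 2) = 1 + α ^ 2 :=
      Real.mul_self_sqrt (by positivity)
    have he : 1 / (Real.sqrt ((n:ℝ) - 1) * Real.sqrt (1 + α₀ ^ 2)) *
        (Real.sqrt ((n:ℝ) - 1) * α / Real.sqrt (1 + α ^ 2)) =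
        α / (Real.sqrt (1 + α ^ 2) * Real.sqrt (1 + α₀ ^ 2)) := by
      field_simp
    rw [he]
    have hden : 1 + α ^ 2 ≤ Real.sqrt (1 + α ^ 2) * Real.sqrt (1 + α₀ ^ 2) := by
      calc 1 + α ^ 2 = Real.sqrt (1 + α ^ 2) * Real.sqrt (1 + α ^ 2) := hss.symm
        _ ≤ _ := mul_le_mul_of_nonneg_left hsqα₀ hsqαpos.le
    exact div_le_div_of_nonneg_left hα.le (by positivity) hden
  calc 1 / (Real.sqrt (n - 1) * Real.sqrt (1 + α₀ ^ 2)) *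
        Real.sqrt ((n - 1) * α ^ 2 / (1 + α ^ 2)) * Real.sqrt (‖x‖ ^ 2 + u x ^ 2)
      ≤ α / (1 + α ^ 2) * Real.sqrt (‖x‖ ^ 2 + u x ^ 2) :=
        mul_le_mul_of_nonneg_right hcoef (Real.sqrt_nonneg _)
    _ ≤ _ := main
end
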